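/- Define the generalized modified Bessel function ₁K_{z,w}(2x) := (2x^{−z}/w²) ∫₀^∞ u^{2z−1} e^{−u² − x²/u²} sin(wu) sin(wx/u) du for x > 0 and w ≠ 0. Then ₁K_{z,w}(2x) = 2x ∑_{n=0}^∞ ∑_{m=0}^∞ (−w²x)^{n+m} / ((2n+1)!(2m+1)!) · K_{n−m+z}(2x). -/

import Mathlib

open Real MeasureTheory Set

/-- Modified Bessel function of the second kind (via the cosh integral representation,
valid for `Re(x) > 0` and all complex orders `ν`). -/
noncomputable def besselK (ν x : ℂ) : ℂ :=
  ∫ t in Ioi (0:ℝ), Complex.exp (-x * Real.cosh t) * Complex.cosh (ν * t)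

/-- With `₁K_{z,w}(2x) := (2x^{−z}/w²)∫₀^∞ u^{2z−1} e^{−u²−x²/u²} sin(wu) sin(wx/u) du`,
one has `₁K_{z,w}(2x) = 2x ∑_{n,m≥0} (−w²x)^{n+m}/((2n+1)!(2m+1)!) K_{n−m+z}(2x)`. -/

lemma quad_bound' (c β v : ℝ) (hβ : 0 < β) : c*v - β*v^2 ≤ c^2/(4*β) := by
  have h : (c*v - β*v^2) * (4*β) ≤ c^2 := by nlinarith [sq_nonneg (2*β*v - c)]
  calc c*v - β*v^2 = (c*v - β*v^2) * (4*β) / (4*β) := by field_simp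
  _ ≤ c^2/(4*β) := by gcongr

lemma cosh_ge_sq (t : ℝ) : t^2/8 ≤ Real.cosh t := by
  rw [← Real.cosh_abs]
  have h0 : (0:ℝ) ≤ |t|/2 := by positivity
  have h1 : |t|/2 + 1 ≤ Real.exp (|t|/2) := Real.add_one_le_exp _
  have h2 : t^2/4 ≤ Real.exp |t| := by
    have : Real.exp (|t|/2) * Real.exp (|t|/2) = Real.exp |t| := by
      rw [← Real.exp_add]; ring_nf
    nlinarith [sq_abs t]
  have h3 : Real.exp |t| ≤ 2 * Real.cosh |t| := by
    rw [Real.cosh_eq]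
    have := Real.exp_pos (-|t|); linarith
  linarith

lemma sinh_le_exp (t : ℝ) : Real.sinh t ≤ Real.exp t := by
  rw [Real.sinh_eq]
  have h1 := Real.exp_pos (-t)
  have h2 := Real.exp_pos t
  linarith

lemma exp_cosh_integrable (a : ℝ) {x : ℝ} (hx : 0 < x) :
    Integrable (fun t : ℝ => Real.exp (a*t - 2*x*Real.cosh t)) := by
  have hx8 : 0 < x/8 := by linarith
  apply Integrable.mono' ((integrable_exp_neg_mul_sq hx8).const_mul (Real.exp (2*a^2/x)))
  · exact (Real.continuous_exp.comp ((continuous_const.mul continuous_id).sub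
      (continuous_const.mul Real.continuous_cosh))).aestronglyMeasurable
  · filter_upwards with t
    rw [Real.norm_eq_abs, abs_of_pos (Real.exp_pos _), ← Real.exp_add]
    apply Real.exp_le_exp.mpr
    have h1 := cosh_ge_sq t
    have h2 : a*t ≤ |a| * |t| := by
      calc a*t ≤ |a*t| := le_abs_self _
      _ = |a| * |t| := abs_mul a t
    have h3 : |a| * |t| - (x/8)*|t|^2 ≤ |a|^2/(4*(x/8)) := quad_bound' |a| (x/8) |t| hx8
    have h4 : |a|^2 = a^2 := sq_abs a
    have h5 : |t|^2 = t^2 := sq_abs t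
    have h6 : |a|^2/(4*(x/8)) = 2*a^2/x := by rw [h4]; field_simp; ring
    nlinarith


lemma exp_cosh_integrableC (ν : ℂ) {x : ℝ} (hx : 0 < x) :
    Integrable (fun t : ℝ => Complex.exp (ν*t) * (Real.exp (-(2*x)*Real.cosh t) : ℂ)) := by
  apply Integrable.mono' (exp_cosh_integrable ν.re hx)
  · apply Continuous.aestronglyMeasurable
    exact (Complex.continuous_exp.comp (continuous_const.mul Complex.continuous_ofReal)).mul
      (Complex.continuous_ofReal.comp (Real.continuous_exp.comp
        (continuous_const.mul Real.continuous_cosh)))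
  · filter_upwards with t
    rw [norm_mul, Complex.norm_exp,
      Complex.norm_real, Real.norm_eq_abs, abs_of_pos (Real.exp_pos _), ← Real.exp_add]
    apply le_of_eq
    congr 1
    simp [Complex.mul_re]
    ring

lemma besselK_int (ν : ℂ) {x : ℝ} (hx : 0 < x) :
    (∫ t : ℝ, Complex.exp (ν*t) * (Real.exp (-(2*x)*Real.cosh t) : ℂ))
      = 2 * besselK ν (2*(x:ℂ)) := by
  have hI := exp_cosh_integrableC ν hx
  have hI' := exp_cosh_integrableC (-ν) hx
  rw [← intervalIntegral.integral_Iic_add_Ioi (b := 0) hI.integrableOn hI.integrableOn]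
  have h0 : (∫ t in Iic (0:ℝ), Complex.exp (ν*t) * (Real.exp (-(2*x)*Real.cosh t) : ℂ))
      = ∫ t in Ioi (0:ℝ), Complex.exp (-ν*t) * (Real.exp (-(2*x)*Real.cosh t) : ℂ) := by
    rw [show Iic (0:ℝ) = Iic (-0) by norm_num, ← integral_comp_neg_Ioi]
    apply setIntegral_congr_fun measurableSet_Ioi
    intro t _
    simp only [Real.cosh_neg, Complex.ofReal_neg, neg_mul, mul_neg]
  rw [h0, ← integral_add hI'.integrableOn hI.integrableOn]
  unfold besselK
  rw [← integral_const_mul]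
  apply setIntegral_congr_fun measurableSet_Ioi
  intro t _
  have : ((Real.exp (-(2*x)*Real.cosh t) : ℝ) : ℂ)
      = Complex.exp (-(2*(x:ℂ)) * (Real.cosh t : ℂ)) := by
    rw [Complex.ofReal_exp]; push_cast; ring_nf
  simp only
  rw [this, neg_mul ν, ← Complex.cosh_sub_sinh (ν*(t:ℂ)), ← Complex.cosh_add_sinh (ν*(t:ℂ))]
  ring


lemma cpow_real_exp (r : ℝ) (c : ℂ) : ((Real.exp r : ℝ) : ℂ) ^ c = Complex.exp (c * r) := by
  rw [Complex.ofReal_exp, Complex.cpow_def_of_ne_zero (Complex.exp_ne_zero _),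
    Complex.log_exp (by simpa using Real.pi_pos) (by simpa using Real.pi_pos.le), mul_comm]

lemma integral_Ioi_exp_smul (g : ℝ → ℂ) :
    ∫ u in Ioi (0:ℝ), g u = ∫ s : ℝ, Real.exp s • g (Real.exp s) := by
  have h := integral_image_eq_integral_abs_deriv_smul MeasurableSet.univ
    (fun s _ => (Real.hasDerivAt_exp s).hasDerivWithinAt) Real.exp_injective.injOn g
  rw [Set.image_univ, Real.range_exp, Measure.restrict_univ] at h
  rw [h]
  congr 1; funext s; rw [abs_of_pos (Real.exp_pos s)]

lemma cpow_pos_real (c : ℂ) {r : ℝ} (hr : 0 < r) :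
    ((r : ℝ) : ℂ) ^ c = Complex.exp (c * Real.log r) := by
  conv_lhs => rw [← Real.exp_log hr]
  exact cpow_real_exp _ c

lemma key_integral (ν : ℂ) {x : ℝ} (hx : 0 < x) :
    (∫ u in Ioi (0:ℝ), (u:ℂ)^(2*ν-1) * (Real.exp (-u^2 - x^2/u^2) : ℂ))
      = (x:ℂ)^ν * besselK ν (2*(x:ℂ)) := by
  rw [integral_Ioi_exp_smul]
  have h1 : (fun s : ℝ => Real.exp s • ((((Real.exp s : ℝ)):ℂ)^(2*ν-1) *
        (Real.exp (-(Real.exp s)^2 - x^2/(Real.exp s)^2) : ℂ)))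
      = fun s : ℝ => (fun σ : ℝ => Complex.exp (ν*σ) *
        (Real.exp (-(Real.exp σ) - x^2 * Real.exp (-σ)) : ℂ)) (2*s) := by
    funext s
    have he : -(Real.exp s)^2 - x^2/(Real.exp s)^2 = -(Real.exp (2*s)) - x^2 * Real.exp (-(2*s)) := by
      rw [show (2:ℝ)*s = s + s by ring, Real.exp_neg, Real.exp_add]
      have h := (Real.exp_pos s).ne'
      field_simp
    rw [he, cpow_real_exp, Complex.real_smul, Complex.ofReal_exp]
    simp only
    rw [← mul_assoc, ← Complex.exp_add]
    congr 2
    push_cast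
    ring
  rw [h1]
  rw [MeasureTheory.Measure.integral_comp_mul_left
    (fun σ : ℝ => Complex.exp (ν*σ) * (Real.exp (-(Real.exp σ) - x^2 * Real.exp (-σ)) : ℂ)) 2]
  rw [← integral_add_right_eq_self
    (fun σ : ℝ => Complex.exp (ν*σ) * (Real.exp (-(Real.exp σ) - x^2 * Real.exp (-σ)) : ℂ))
    (Real.log x)]
  have h2 : (fun t : ℝ => (fun σ : ℝ => Complex.exp (ν*σ) *
        (Real.exp (-(Real.exp σ) - x^2 * Real.exp (-σ)) : ℂ)) (t + Real.log x))
      = fun t : ℝ => (x:ℂ)^ν * (Complex.exp (ν*t) * (Real.exp (-(2*x)*Real.cosh t) : ℂ)) := by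
    funext t
    simp only
    have hea : Real.exp (t + Real.log x) = x * Real.exp t := by
      rw [Real.exp_add, Real.exp_log hx]; ring
    have heb : -(Real.exp (t + Real.log x)) - x^2 * Real.exp (-(t + Real.log x))
        = -(2*x)*Real.cosh t := by
      rw [hea, Real.exp_neg, hea, Real.cosh_eq, Real.exp_neg]
      field_simp
      ring
    rw [heb, cpow_pos_real ν hx, ← mul_assoc, ← Complex.exp_add]
    congr 2
    push_cast
    ring
  rw [h2, MeasureTheory.integral_const_mul, besselK_int ν hx,
    abs_of_pos (by norm_num : (0:ℝ) < (2:ℝ)⁻¹), Complex.real_smul]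
  push_cast
  ring


lemma sinh_nonneg' {t : ℝ} (h : 0 ≤ t) : 0 ≤ Real.sinh t := by
  rw [← Real.sinh_zero]
  exact Real.sinh_le_sinh.mpr h

lemma h_contOn (a c : ℝ) (x : ℝ) :
    ContinuousOn (fun u : ℝ => u ^ a * Real.exp (-u^2 - x^2/u^2) *
      (Real.sinh (c*u) * Real.sinh (c*(x/u)))) (Ioi 0) := by
  intro u hu
  have hu0 : (0:ℝ) < u := hu
  apply ContinuousAt.continuousWithinAt
  have c1 : ContinuousAt (fun u : ℝ => u ^ a) u :=
    Real.continuousAt_rpow_const u a (Or.inl hu0.ne')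
  have c2 : ContinuousAt (fun u : ℝ => Real.exp (-u^2 - x^2/u^2)) u := by
    apply Real.continuous_exp.continuousAt.comp
    exact ((continuousAt_id.pow 2).neg).sub
      (continuousAt_const.div (continuousAt_id.pow 2) (pow_ne_zero 2 hu0.ne'))
  have c3 : ContinuousAt (fun u : ℝ => Real.sinh (c*u)) u :=
    Real.continuous_sinh.continuousAt.comp (continuousAt_const.mul continuousAt_id)
  have c4 : ContinuousAt (fun u : ℝ => Real.sinh (c*(x/u))) u := by
    apply Real.continuous_sinh.continuousAt.comp
    exact continuousAt_const.mul (continuousAt_const.div continuousAt_id hu0.ne')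
  exact (c1.mul c2).mul (c3.mul c4)

lemma h_integrable (a c : ℝ) (hc : 0 ≤ c) {x : ℝ} (hx : 0 < x) :
    IntegrableOn (fun u : ℝ => u ^ a * Real.exp (-u^2 - x^2/u^2) *
      (Real.sinh (c*u) * Real.sinh (c*(x/u)))) (Ioi 0) := by
  have hcont := h_contOn a c x
  rw [← Ioc_union_Ioi_eq_Ioi (zero_le_one (α := ℝ))]
  apply IntegrableOn.union
  · apply Integrable.mono'
      (g := fun _ : ℝ => Real.exp (c + (|a| + c*x)^2/(4*x^2)))
      (integrableOn_const measure_Ioc_lt_top.ne)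
    · exact (hcont.mono Ioc_subset_Ioi_self).aestronglyMeasurable measurableSet_Ioc
    · rw [ae_restrict_iff' measurableSet_Ioc]
      filter_upwards with u hu
      obtain ⟨hu0, hu1⟩ := hu
      have s1 : 0 ≤ Real.sinh (c*u) := sinh_nonneg' (by positivity)
      have s2 : 0 ≤ Real.sinh (c*(x/u)) := sinh_nonneg' (by positivity)
      have hra : (0:ℝ) ≤ u ^ a := (Real.rpow_pos_of_pos hu0 a).le
      rw [Real.norm_eq_abs, abs_of_nonneg (by positivity)]
      have e1 : u ^ a ≤ Real.exp (|a| * (1/u)) := by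
        rw [Real.rpow_def_of_pos hu0]
        apply Real.exp_le_exp.mpr
        rw [mul_comm]
        have hlog : Real.log u ≤ 0 := Real.log_nonpos hu0.le hu1
        have hlog2 : -Real.log u ≤ 1/u := by
          rw [← Real.log_inv, ← one_div]
          exact Real.log_le_self (by positivity)
        calc a * Real.log u ≤ |a * Real.log u| := le_abs_self _
          _ = |a| * |Real.log u| := abs_mul _ _
          _ = |a| * (-Real.log u) := by rw [abs_of_nonpos hlog]
          _ ≤ |a| * (1/u) := by
              exact mul_le_mul_of_nonneg_left hlog2 (abs_nonneg a)
      have e2 : Real.sinh (c*u) ≤ Real.exp c := by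
        refine (sinh_le_exp _).trans (Real.exp_le_exp.mpr ?_)
        nlinarith
      have e3 : Real.sinh (c*(x/u)) ≤ Real.exp (c*x*(1/u)) := by
        refine (sinh_le_exp _).trans (le_of_eq ?_)
        congr 1; ring
      calc u ^ a * Real.exp (-u^2 - x^2/u^2) * (Real.sinh (c*u) * Real.sinh (c*(x/u)))
          ≤ Real.exp (|a| * (1/u)) * Real.exp (-u^2 - x^2/u^2)
            * (Real.exp c * Real.exp (c*x*(1/u))) := by
            apply mul_le_mul (mul_le_mul e1 le_rfl (Real.exp_pos _).le (Real.exp_pos _).le)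
              (mul_le_mul e2 e3 s2 (Real.exp_pos _).le) (by positivity) (by positivity)
        _ = Real.exp (|a| * (1/u) + (-u^2 - x^2/u^2) + (c + c*x*(1/u))) := by
            rw [← Real.exp_add, ← Real.exp_add, ← Real.exp_add]
        _ ≤ Real.exp (c + (|a| + c*x)^2/(4*x^2)) := by
            apply Real.exp_le_exp.mpr
            have h1 : x^2*(1/u)^2 = x^2/u^2 := by field_simp
            nlinarith [quad_bound' (|a| + c*x) (x^2) (1/u) (by positivity), sq_nonneg u]
  · apply Integrable.mono'
      (g := fun u : ℝ => Real.exp (c*x + (|a|+c+1)^2/4) * Real.exp (-u))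
    · have : IntegrableOn (fun u : ℝ => Real.exp (-u)) (Ioi 1) := by
        simpa using exp_neg_integrableOn_Ioi 1 one_pos
      exact this.const_mul _
    · exact (hcont.mono (Ioi_subset_Ioi zero_le_one)).aestronglyMeasurable measurableSet_Ioi
    · rw [ae_restrict_iff' measurableSet_Ioi]
      filter_upwards with u hu
      have hu1 : (1:ℝ) < u := hu
      have hu0 : (0:ℝ) < u := by linarith
      have s1 : 0 ≤ Real.sinh (c*u) := sinh_nonneg' (by positivity)
      have s2 : 0 ≤ Real.sinh (c*(x/u)) := sinh_nonneg' (by positivity)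
      rw [Real.norm_eq_abs, abs_of_nonneg (by positivity)]
      have e1 : u ^ a ≤ Real.exp (|a| * u) := by
        rw [Real.rpow_def_of_pos hu0]
        apply Real.exp_le_exp.mpr
        rw [mul_comm]
        have hlog : 0 ≤ Real.log u := Real.log_nonneg hu1.le
        calc a * Real.log u ≤ |a * Real.log u| := le_abs_self _
          _ = |a| * |Real.log u| := abs_mul _ _
          _ = |a| * Real.log u := by rw [abs_of_nonneg hlog]
          _ ≤ |a| * u := mul_le_mul_of_nonneg_left
              ((Real.log_le_self hu0.le)) (abs_nonneg a)
      have e2 : Real.sinh (c*u) ≤ Real.exp (c*u) := sinh_le_exp _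
      have e3 : Real.sinh (c*(x/u)) ≤ Real.exp (c*x) := by
        refine (sinh_le_exp _).trans (Real.exp_le_exp.mpr ?_)
        have : x/u ≤ x := div_le_self hx.le hu1.le
        nlinarith
      calc u ^ a * Real.exp (-u^2 - x^2/u^2) * (Real.sinh (c*u) * Real.sinh (c*(x/u)))
          ≤ Real.exp (|a| * u) * Real.exp (-u^2 - x^2/u^2)
            * (Real.exp (c*u) * Real.exp (c*x)) := by
            apply mul_le_mul (mul_le_mul e1 le_rfl (Real.exp_pos _).le (Real.exp_pos _).le)
              (mul_le_mul e2 e3 s2 (Real.exp_pos _).le) (by positivity) (by positivity)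
        _ = Real.exp (|a| * u + (-u^2 - x^2/u^2) + (c*u + c*x)) := by
            rw [← Real.exp_add, ← Real.exp_add, ← Real.exp_add]
        _ ≤ Real.exp (c*x + (|a|+c+1)^2/4) * Real.exp (-u) := by
            rw [← Real.exp_add]
            apply Real.exp_le_exp.mpr
            have hq := quad_bound' (|a|+c+1) 1 u one_pos
            have hx2 : 0 ≤ x^2/u^2 := by positivity
            nlinarith


lemma contOn_cpow (c : ℂ) : ContinuousOn (fun u : ℝ => ((u:ℝ):ℂ) ^ c) (Ioi 0) := by
  intro u hu
  have hu0 : (0:ℝ) < u := hu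
  have h1 : ContinuousAt (fun z : ℂ => z ^ c) ((u:ℝ):ℂ) := by
    apply continuousAt_cpow_const
    exact Complex.mem_slitPlane_iff.mpr (Or.inl (by simpa using hu0))
  exact (h1.comp Complex.continuous_ofReal.continuousAt).continuousWithinAt


theorem oneK_double_series (z w : ℂ) (hw : w ≠ 0) (x : ℝ) (hx : 0 < x) :
    (2 * (x:ℂ)^(-z) / w^2) *
      ∫ u in Ioi (0:ℝ),
        (u:ℂ)^(2*z-1 : ℂ) * (Real.exp (-u^2 - x^2/u^2) : ℂ) *
          Complex.sin (w * u) * Complex.sin (w * x / u)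
      = 2 * (x:ℂ) * ∑' n : ℕ, ∑' m : ℕ,
          (-w^2 * x)^(n+m) / (((2*n+1).factorial : ℂ) * ((2*m+1).factorial : ℂ))
            * besselK ((n:ℂ) - (m:ℂ) + z) (2*(x:ℂ)) := by
  set b : ℝ := ‖w‖ with hbdef
  have hb : 0 ≤ b := norm_nonneg w
  set F : ℕ × ℕ → ℝ → ℂ := fun p u =>
    ((u:ℂ)^(2*z-1) * (Real.exp (-u^2 - x^2/u^2) : ℂ)) *
      (((-1)^p.1 * (w * u)^(2*p.1+1) / ((2*p.1+1).factorial : ℂ)) *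
       ((-1)^p.2 * (w * x / u)^(2*p.2+1) / ((2*p.2+1).factorial : ℂ))) with hFdef
  -- norm of each term
  have hFnorm : ∀ u : ℝ, 0 < u → ∀ p : ℕ × ℕ, ‖F p u‖ =
      (u ^ (2*z.re-1) * Real.exp (-u^2 - x^2/u^2)) *
        ((b*u)^(2*p.1+1) / ((2*p.1+1).factorial : ℝ) *
         ((b*(x/u))^(2*p.2+1) / ((2*p.2+1).factorial : ℝ))) := by
    intro u hu p
    have hre : (2*z-1).re = 2*z.re - 1 := by simp [Complex.sub_re, Complex.mul_re]
    simp only [hFdef, norm_mul, norm_div, norm_pow, map_mul, map_div₀,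
      map_pow, Complex.norm_natCast, Complex.norm_real, Real.norm_eq_abs, Complex.norm_cpow_eq_rpow_re_of_pos hu, hre,
      abs_of_pos (Real.exp_pos _), abs_of_pos hu, abs_of_pos hx]
    rw [show ‖(-1:ℂ)‖ = 1 by simp, ← hbdef]
    ring
  have sinh_nonneg' : ∀ {t : ℝ}, 0 ≤ t → 0 ≤ Real.sinh t := by
    intro t h
    rw [← Real.sinh_zero]
    exact Real.sinh_le_sinh.mpr h
  -- continuity of each term
  have hFcont : ∀ p : ℕ × ℕ, ContinuousOn (F p) (Ioi 0) := by
    intro p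
    apply ContinuousOn.mul
    · apply (contOn_cpow (2*z-1)).mul
      apply Complex.continuous_ofReal.comp_continuousOn
      apply Real.continuous_exp.comp_continuousOn
      exact ((continuous_pow 2).neg.continuousOn).sub
        (continuousOn_const.div ((continuous_pow 2).continuousOn)
          (fun u hu => pow_ne_zero 2 (ne_of_gt hu)))
    · apply ContinuousOn.mul
      · exact (((continuous_const.mul ((continuous_const.mul
          Complex.continuous_ofReal).pow _)).div_const _)).continuousOn
      · apply ContinuousOn.div_const
        apply continuousOn_const.mul
        apply ContinuousOn.pow
        exact ContinuousOn.div continuousOn_const Complex.continuous_ofReal.continuousOn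
          (fun u hu => Complex.ofReal_ne_zero.mpr (ne_of_gt hu))
  have hmeas : ∀ p : ℕ × ℕ, AEStronglyMeasurable (F p) (volume.restrict (Ioi 0)) :=
    fun p => (hFcont p).aestronglyMeasurable measurableSet_Ioi
  -- finiteness of the sum of lintegrals
  have hinth := h_integrable (2*z.re-1) b hb hx
  have hC : (∑' p : ℕ × ℕ, ∫⁻ u, ‖F p u‖₊ ∂(volume.restrict (Ioi 0))) ≠ ⊤ := by
    rw [← lintegral_tsum (f := fun p u => (‖F p u‖₊ : ENNReal)) (fun p => (hmeas p).enorm)]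
    have heq : (∫⁻ u in Ioi (0:ℝ), ∑' p : ℕ × ℕ, (‖F p u‖₊ : ENNReal))
        = ∫⁻ u in Ioi (0:ℝ), ENNReal.ofReal (u ^ (2*z.re-1) * Real.exp (-u^2 - x^2/u^2) *
            (Real.sinh (b*u) * Real.sinh (b*(x/u)))) := by
      apply setLIntegral_congr_fun measurableSet_Ioi
      intro u hu
      have hu0 : (0:ℝ) < u := hu
      have hs1 : Summable (fun n : ℕ => (b*u)^(2*n+1) / ((2*n+1).factorial : ℝ)) :=
        (Real.hasSum_sinh (b*u)).summable
      have hs2 : Summable (fun m : ℕ => (b*(x/u))^(2*m+1) / ((2*m+1).factorial : ℝ)) :=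
        (Real.hasSum_sinh (b*(x/u))).summable
      have hbu : (0:ℝ) ≤ b*u := mul_nonneg hb hu0.le
      have hbxu : (0:ℝ) ≤ b*(x/u) := mul_nonneg hb (by positivity)
      have hnn1 : ∀ n : ℕ, 0 ≤ (b*u)^(2*n+1) / ((2*n+1).factorial : ℝ) :=
        fun n => div_nonneg (pow_nonneg hbu _) (Nat.cast_nonneg _)
      have hnn2 : ∀ m : ℕ, 0 ≤ (b*(x/u))^(2*m+1) / ((2*m+1).factorial : ℝ) :=
        fun m => div_nonneg (pow_nonneg hbxu _) (Nat.cast_nonneg _)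
      have hA0 : 0 ≤ u ^ (2*z.re-1) * Real.exp (-u^2 - x^2/u^2) :=
        mul_nonneg (Real.rpow_nonneg hu0.le _) (Real.exp_pos _).le
      calc (∑' p : ℕ × ℕ, (‖F p u‖₊ : ENNReal))
          = ∑' p : ℕ × ℕ, ENNReal.ofReal (u ^ (2*z.re-1) * Real.exp (-u^2 - x^2/u^2))
              * (ENNReal.ofReal ((b*u)^(2*p.1+1) / ((2*p.1+1).factorial : ℝ))
                  * ENNReal.ofReal ((b*(x/u))^(2*p.2+1) / ((2*p.2+1).factorial : ℝ))) := by
            congr 1; funext p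
            rw [← ENNReal.ofReal_coe_nnreal, coe_nnnorm, hFnorm u hu0 p,
              ENNReal.ofReal_mul hA0, ENNReal.ofReal_mul (hnn1 p.1)]
        _ = ENNReal.ofReal (u ^ (2*z.re-1) * Real.exp (-u^2 - x^2/u^2))
              * ((∑' n : ℕ, ENNReal.ofReal ((b*u)^(2*n+1) / ((2*n+1).factorial : ℝ)))
                  * (∑' m : ℕ, ENNReal.ofReal ((b*(x/u))^(2*m+1) / ((2*m+1).factorial : ℝ)))) := by
            rw [ENNReal.tsum_mul_left, ENNReal.tsum_prod']
            congr 1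
            calc (∑' (n : ℕ) (m : ℕ), ENNReal.ofReal ((b*u)^(2*n+1) / ((2*n+1).factorial : ℝ))
                  * ENNReal.ofReal ((b*(x/u))^(2*m+1) / ((2*m+1).factorial : ℝ)))
                = ∑' n : ℕ, ENNReal.ofReal ((b*u)^(2*n+1) / ((2*n+1).factorial : ℝ))
                  * (∑' m : ℕ, ENNReal.ofReal ((b*(x/u))^(2*m+1) / ((2*m+1).factorial : ℝ))) := by
                  congr 1; funext n; rw [ENNReal.tsum_mul_left]
              _ = _ := ENNReal.tsum_mul_right
        _ = ENNReal.ofReal (u ^ (2*z.re-1) * Real.exp (-u^2 - x^2/u^2) *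
              (Real.sinh (b*u) * Real.sinh (b*(x/u)))) := by
            rw [← ENNReal.ofReal_tsum_of_nonneg hnn1 hs1, ← ENNReal.ofReal_tsum_of_nonneg hnn2 hs2,
              (Real.hasSum_sinh (b*u)).tsum_eq, (Real.hasSum_sinh (b*(x/u))).tsum_eq,
              ← ENNReal.ofReal_mul (sinh_nonneg' hbu), ← ENNReal.ofReal_mul hA0]
    rw [heq]
    exact hinth.lintegral_lt_top.ne
  -- pointwise series expansion of the integrand
  have htsum_eq : EqOn (fun u : ℝ => (u:ℂ)^(2*z-1 : ℂ) * (Real.exp (-u^2 - x^2/u^2) : ℂ) *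
      Complex.sin (w * u) * Complex.sin (w * x / u)) (fun u => ∑' p : ℕ × ℕ, F p u) (Ioi 0) := by
    intro u hu
    have h1 : Summable (fun n : ℕ => ‖(-1:ℂ)^n * (w * u)^(2*n+1) / ((2*n+1).factorial : ℂ)‖) := by
      have he : (fun n : ℕ => ‖(-1:ℂ)^n * (w * u)^(2*n+1) / ((2*n+1).factorial : ℂ)‖)
          = fun n : ℕ => ‖w * u‖^(2*n+1) / ((2*n+1).factorial : ℝ) := by
        funext n
        simp [map_mul, map_div₀, map_pow, Complex.norm_natCast]
      rw [he]
      exact (Real.hasSum_sinh _).summable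
    have h2 : Summable (fun m : ℕ => ‖(-1:ℂ)^m * (w * x / u)^(2*m+1) / ((2*m+1).factorial : ℂ)‖) := by
      have he : (fun m : ℕ => ‖(-1:ℂ)^m * (w * x / u)^(2*m+1) / ((2*m+1).factorial : ℂ)‖)
          = fun m : ℕ => ‖w * x / u‖^(2*m+1) / ((2*m+1).factorial : ℝ) := by
        funext m
        simp [map_mul, map_div₀, map_pow, Complex.norm_natCast]
      rw [he]
      exact (Real.hasSum_sinh _).summable
    have hmulsum : Summable (fun q : ℕ × ℕ =>
        ((-1:ℂ)^q.1 * (w * u)^(2*q.1+1) / ((2*q.1+1).factorial : ℂ)) *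
        ((-1:ℂ)^q.2 * (w * x / u)^(2*q.2+1) / ((2*q.2+1).factorial : ℂ))) :=
      (Summable.mul_norm h1 h2).of_norm
    have hh := ((Complex.hasSum_sin (w * u)).mul (Complex.hasSum_sin (w * x / u)) hmulsum).mul_left
      ((u:ℂ)^(2*z-1) * (Real.exp (-u^2 - x^2/u^2) : ℂ))
    simp only
    rw [mul_assoc]
    exact hh.tsum_eq.symm
  -- exchange integral and sum
  have hint : (∫ u in Ioi (0:ℝ), (u:ℂ)^(2*z-1 : ℂ) * (Real.exp (-u^2 - x^2/u^2) : ℂ) *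
      Complex.sin (w * u) * Complex.sin (w * x / u)) = ∑' p : ℕ × ℕ, ∫ u in Ioi (0:ℝ), F p u := by
    rw [setIntegral_congr_fun measurableSet_Ioi htsum_eq]
    exact integral_tsum hmeas hC
  -- evaluate each term
  have hterm : ∀ p : ℕ × ℕ, (∫ u in Ioi (0:ℝ), F p u) =
      ((-1:ℂ)^(p.1+p.2) * w^(2*p.1+2*p.2+2) * (x:ℂ)^(2*p.2+1) /
        (((2*p.1+1).factorial : ℂ) * ((2*p.2+1).factorial : ℂ))) *
      (((x:ℂ))^((p.1:ℂ) - (p.2:ℂ) + z) * besselK ((p.1:ℂ) - (p.2:ℂ) + z) (2*(x:ℂ))) := by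
    rintro ⟨n, m⟩
    have hcong : EqOn (F (n,m)) (fun u : ℝ =>
        ((-1:ℂ)^(n+m) * w^(2*n+2*m+2) * (x:ℂ)^(2*m+1) /
          (((2*n+1).factorial : ℂ) * ((2*m+1).factorial : ℂ))) *
        ((u:ℂ)^(2*((n:ℂ) - (m:ℂ) + z)-1) * (Real.exp (-u^2 - x^2/u^2) : ℂ))) (Ioi 0) := by
      intro u hu
      have hu0 : (0:ℝ) < u := hu
      have hune : (u:ℂ) ≠ 0 := Complex.ofReal_ne_zero.mpr hu0.ne'
      have hfac1 : ((2*n+1).factorial : ℂ) ≠ 0 := Nat.cast_ne_zero.mpr (Nat.factorial_ne_zero _)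
      have hfac2 : ((2*m+1).factorial : ℂ) ≠ 0 := Nat.cast_ne_zero.mpr (Nat.factorial_ne_zero _)
      have hsplit : 2*((n:ℂ) - (m:ℂ) + z)-1 = (2*z-1) + ((2*(n:ℤ) - 2*(m:ℤ) : ℤ) : ℂ) := by
        push_cast; ring
      have hzpow : ((u:ℂ))^((2*(n:ℤ) - 2*(m:ℤ) : ℤ)) = (u:ℂ)^(2*n) / (u:ℂ)^(2*m) := by
        rw [zpow_sub₀ hune, show (2*(n:ℤ)) = ((2*n : ℕ) : ℤ) by push_cast; ring,
          show (2*(m:ℤ)) = ((2*m : ℕ) : ℤ) by push_cast; ring, zpow_natCast, zpow_natCast]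
      simp only [hFdef]
      rw [hsplit, Complex.cpow_add _ _ hune, Complex.cpow_intCast, hzpow]
      rw [div_pow]
      field_simp
      ring
    rw [setIntegral_congr_fun measurableSet_Ioi hcong, MeasureTheory.integral_const_mul,
      key_integral ((n:ℂ) - (m:ℂ) + z) hx]
  -- summability of the term integrals
  have hsum_int : Summable (fun p : ℕ × ℕ => ∫ u in Ioi (0:ℝ), F p u) := by
    apply Summable.of_norm_bounded
      (g := fun p => (∫⁻ u, ‖F p u‖₊ ∂(volume.restrict (Ioi 0))).toReal)
      (ENNReal.summable_toReal hC)
    intro p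
    calc ‖∫ u in Ioi (0:ℝ), F p u‖
        ≤ (∫⁻ u, ENNReal.ofReal ‖F p u‖ ∂(volume.restrict (Ioi 0))).toReal :=
          norm_integral_le_lintegral_norm _
      _ = _ := by simp_rw [← ENNReal.ofReal_coe_nnreal, coe_nnnorm]
  -- final algebraic assembly
  rw [hint, ← tsum_mul_left]
  have hxne : (x:ℂ) ≠ 0 := Complex.ofReal_ne_zero.mpr hx.ne'
  have hfinal : ∀ p : ℕ × ℕ, (2 * (x:ℂ)^(-z) / w^2) * (∫ u in Ioi (0:ℝ), F p u)
      = 2 * (x:ℂ) * ((-w^2 * (x:ℂ))^(p.1+p.2) /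
          (((2*p.1+1).factorial : ℂ) * ((2*p.2+1).factorial : ℂ))
          * besselK ((p.1:ℂ) - (p.2:ℂ) + z) (2*(x:ℂ))) := by
    intro p
    rw [hterm p]
    have e1 : ((x:ℂ))^((p.1:ℂ) - (p.2:ℂ) + z) = (x:ℂ)^p.1 / (x:ℂ)^p.2 * (x:ℂ)^z := by
      rw [Complex.cpow_add _ _ hxne, Complex.cpow_sub _ _ hxne,
        Complex.cpow_natCast, Complex.cpow_natCast]
    have e2 : (x:ℂ)^(-z) = ((x:ℂ)^z)⁻¹ := Complex.cpow_neg _ _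
    have hxzne : (x:ℂ)^z ≠ 0 := by
      rw [Complex.cpow_def_of_ne_zero hxne]; exact Complex.exp_ne_zero _
    have hxm : ((x:ℂ))^(p.2 : ℕ) ≠ 0 := pow_ne_zero _ hxne
    have hfac1 : ((2*p.1+1).factorial : ℂ) ≠ 0 := Nat.cast_ne_zero.mpr (Nat.factorial_ne_zero _)
    have hfac2 : ((2*p.2+1).factorial : ℂ) ≠ 0 := Nat.cast_ne_zero.mpr (Nat.factorial_ne_zero _)
    have hw2 : w^2 ≠ 0 := pow_ne_zero _ hw
    rw [e1, e2]
    field_simp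
    ring
  rw [tsum_congr hfinal]
  have hsum2 : Summable (fun p : ℕ × ℕ => 2 * (x:ℂ) * ((-w^2 * (x:ℂ))^(p.1+p.2) /
      (((2*p.1+1).factorial : ℂ) * ((2*p.2+1).factorial : ℂ))
      * besselK ((p.1:ℂ) - (p.2:ℂ) + z) (2*(x:ℂ)))) :=
    Summable.congr (hsum_int.mul_left (2 * (x:ℂ)^(-z) / w^2)) hfinal
  rw [Summable.tsum_prod' hsum2 (fun n => hsum2.comp_injective
    (fun a c hac => congrArg Prod.snd hac))]
  simp_rw [tsum_mul_left]
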